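/- For every c > 0 and every μ̄ ∈ [0,1], the pair (U₁(c,μ̄), U₂(c,μ̄)) is the unique pair of nonnegative real numbers (u₁,u₂) satisfying the best-response system u₁ = ((1−μ̄) + 1/(u₂+1))/c and u₂ = (μ̄ + 1/(u₁+1))/c; moreover both U₁(c,μ̄) > 0 and U₂(c,μ̄) > 0. -/

import Mathlib

/-- Equilibrium advertisement efficiency of major player 1 in the two-major-player
game, given unit advertisement cost `c` and mean consumer preference `m`. -/
noncomputable def U1 (c m : ℝ) : ℝ :=
  -(m ^ 2 + 2 * c * m - m - c + c ^ 2 -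
      Real.sqrt ((c + m) * (c ^ 2 + 5 * c - m ^ 2 + m) * (c - m + 1))) / (2 * c * (c + m))

/-- Equilibrium advertisement efficiency of major player 2 in the two-major-player
game, given unit advertisement cost `c` and mean consumer preference `m`. -/
noncomputable def U2 (c m : ℝ) : ℝ :=
  (m - c + Real.sqrt ((c + m) * (c ^ 2 + 5 * c - m ^ 2 + m) / (c - m + 1))) / (2 * c)

set_option maxHeartbeats 1000000 in
theorem stmt_3 (c μ : ℝ) (hc : 0 < c) (hμ : μ ∈ Set.Icc (0 : ℝ) 1) :
    0 < U1 c μ ∧ 0 < U2 c μ ∧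
    U1 c μ = (1 - μ + 1 / (U2 c μ + 1)) / c ∧
    U2 c μ = (μ + 1 / (U1 c μ + 1)) / c ∧
    ∀ u₁ u₂ : ℝ, 0 ≤ u₁ → 0 ≤ u₂ →
      u₁ = (1 - μ + 1 / (u₂ + 1)) / c → u₂ = (μ + 1 / (u₁ + 1)) / c →
      u₁ = U1 c μ ∧ u₂ = U2 c μ := by
  obtain ⟨hμ0, hμ1⟩ := hμ
  have ha : (0:ℝ) < c - μ + 1 := by linarith
  have hK : (0:ℝ) < c + μ := by linarith
  have hP : (0:ℝ) < c ^ 2 + 5 * c - μ ^ 2 + μ := by nlinarith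
  set a : ℝ := c - μ + 1 with ha_def
  set K : ℝ := c + μ with hK_def
  set S : ℝ := Real.sqrt ((c + μ) * (c ^ 2 + 5 * c - μ ^ 2 + μ) * (c - μ + 1)) with hS_def
  have hS2 : S ^ 2 = (c + μ) * (c ^ 2 + 5 * c - μ ^ 2 + μ) * (c - μ + 1) := by
    rw [hS_def]
    exact Real.sq_sqrt (by positivity)
  have hS2' : S ^ 2 = K ^ 2 * a ^ 2 + 4 * c * K * a := by
    rw [hS2, hK_def, ha_def]; ring
  have hSpos : 0 < S := by
    rw [hS_def]; exact Real.sqrt_pos.2 (by positivity)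
  have hKaS : K * a < S := by nlinarith [mul_pos hK ha, mul_pos (mul_pos hc hK) ha]
  -- closed forms
  have hU1v : U1 c μ = (S - K * (K - 1)) / (2 * c * K) := by
    rw [U1, ← hS_def, hK_def]; ring
  have hsqrt2 : Real.sqrt ((c + μ) * (c ^ 2 + 5 * c - μ ^ 2 + μ) / (c - μ + 1)) = S / a := by
    have h : (c + μ) * (c ^ 2 + 5 * c - μ ^ 2 + μ) / (c - μ + 1) = (S / a) ^ 2 := by
      rw [div_pow, hS2, ha_def]
      field_simp
    rw [h, Real.sqrt_sq (by positivity)]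
  have hU2v : U2 c μ = ((μ - c) * a + S) / (2 * c * a) := by
    rw [U2, hsqrt2, div_eq_div_iff (by positivity) (by positivity)]
    field_simp
  -- positivity
  have hcmK : (c - μ) * a ≤ K * a := by
    rw [hK_def]; nlinarith [mul_nonneg hμ0 ha.le]
  have hKK1 : K * (K - 1) ≤ K * a := by
    rw [hK_def, ha_def]; nlinarith [mul_nonneg hK.le (by linarith : (0:ℝ) ≤ 2 - 2*μ)]
  have hU1pos : 0 < U1 c μ := by
    rw [hU1v]; apply div_pos (by linarith) (by positivity)
  have hU2pos : 0 < U2 c μ := by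
    rw [hU2v]; apply div_pos (by nlinarith) (by positivity)
  -- inverse formulas
  have hU2p1 : U2 c μ + 1 = (K * a + S) / (2 * c * a) := by
    rw [hU2v, hK_def]; field_simp; ring
  have hU1p1 : U1 c μ + 1 = (S + K * a) / (2 * c * K) := by
    rw [hU1v, ha_def, hK_def]; field_simp; ring
  have hinv2 : 1 / (U2 c μ + 1) = (S - K * a) / (2 * K) := by
    rw [hU2p1, one_div_div, div_eq_div_iff (by positivity) (by positivity)]
    linear_combination -hS2'
  have hinv1 : 1 / (U1 c μ + 1) = (S - K * a) / (2 * a) := by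
    rw [hU1p1, one_div_div, div_eq_div_iff (by positivity) (by positivity)]
    linear_combination -hS2'
  -- fixed point equations
  have heq1 : U1 c μ = (1 - μ + 1 / (U2 c μ + 1)) / c := by
    rw [hinv2, hU1v, hK_def]
    field_simp
    ring
  have heq2 : U2 c μ = (μ + 1 / (U1 c μ + 1)) / c := by
    rw [hinv1, hU2v, hK_def, ha_def]
    have ha' : c - μ + 1 ≠ 0 := ne_of_gt (by linarith)
    field_simp
    ring
  refine ⟨hU1pos, hU2pos, heq1, heq2, ?_⟩
  -- uniqueness
  intro u₁ u₂ h1 h2 hu1 hu2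
  have hu2p1 : (0:ℝ) < u₂ + 1 := by linarith
  have hu1p1 : (0:ℝ) < u₁ + 1 := by linarith
  have e1 : c * u₁ * (u₂ + 1) = (1 - μ) * (u₂ + 1) + 1 := by
    rw [hu1]; field_simp
  have e2 : c * u₂ * (u₁ + 1) = μ * (u₁ + 1) + 1 := by
    rw [hu2]; field_simp
  have hq : c * a * u₂ ^ 2 + (c - μ) * a * u₂ - (μ * a + μ + c) = 0 := by
    rw [ha_def]
    linear_combination (c * (u₂ + 1)) * e2 - (c * u₂ - μ) * e1
  -- U2 satisfies same quadratic
  have E1 : c * U1 c μ * (U2 c μ + 1) = (1 - μ) * (U2 c μ + 1) + 1 := by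
    rw [heq1]; field_simp
  have E2 : c * U2 c μ * (U1 c μ + 1) = μ * (U1 c μ + 1) + 1 := by
    rw [heq2]; field_simp
  have hqU : c * a * (U2 c μ) ^ 2 + (c - μ) * a * (U2 c μ) - (μ * a + μ + c) = 0 := by
    rw [ha_def]
    linear_combination (c * (U2 c μ + 1)) * E2 - (c * U2 c μ - μ) * E1
  have hfac : (u₂ - U2 c μ) * (c * a * (u₂ + U2 c μ) + (c - μ) * a) = 0 := by
    linear_combination hq - hqU
  have hfac2 : 0 < c * a * (u₂ + U2 c μ) + (c - μ) * a := by
    have hS3 : (c - μ) * a < S := lt_of_le_of_lt hcmK hKaS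
    have hS4 : (μ - c) * a < S := by
      have hd : K * a - (μ - c) * a = 2 * (c * a) := by rw [hK_def]; ring
      have := mul_pos hc ha
      linarith
    have hcU2 : 0 < c * U2 c μ + (c - μ) := by
      have h' : c * U2 c μ + (c - μ) = ((c - μ) * a + S) / (2 * a) := by
        rw [hU2v]; field_simp; ring
      rw [h']
      refine div_pos ?_ (by linarith)
      have : (μ - c) * a = -((c - μ) * a) := by ring
      linarith
    have key : c * a * (u₂ + U2 c μ) + (c - μ) * a
        = a * (c * u₂) + a * (c * U2 c μ + (c - μ)) := by ring
    rw [key]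
    have t1 := mul_pos ha hcU2
    have t2 := mul_nonneg ha.le (mul_nonneg hc.le h2)
    linarith
  have hu2eq : u₂ = U2 c μ := by
    rcases mul_eq_zero.1 hfac with h | h
    · linarith
    · linarith
  refine ⟨?_, hu2eq⟩
  rw [hu1, hu2eq, ← heq1]
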